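/- For linearly separable data {(x_i, y_i)}_{i=1}^n with maximum ‖·‖_*-margin γ > 0 attained by unit-norm vector u, and the exponential empirical loss L(θ) = (1/n) Σ_i exp(−⟨θ, y_i x_i⟩), Bregman proximal point iterates with L_w-smooth distance generating function, stepsize η, and θ₀ = 0 satisfy L(θ_t) ≤ exp(−R γ) + R² L_w/(4 η t) for every R > 0; in particular, choosing R = log(γ η t)/γ gives L(θ_t) ≤ 1/(γ η t) + L_w log²(γ η t)/(4 γ² η t). -/

import Mathlib

set_option maxHeartbeats 1000000


open scoped RealInnerProductSpace BigOperators

lemma bregman_nonneg_aux {d : ℕ} (w : EuclideanSpace ℝ (Fin d) → ℝ)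
    (gw : EuclideanSpace ℝ (Fin d) → EuclideanSpace ℝ (Fin d))
    (hw : ConvexOn ℝ Set.univ w)
    (hw_diff : ∀ a, HasGradientAt w (gw a) a)
    (a b : EuclideanSpace ℝ (Fin d)) :
    ⟪gw b, a - b⟫ ≤ w a - w b := by
  set φ : ℝ → ℝ := fun s => w (b + s • (a - b)) with hφ
  have hder : HasDerivAt φ (⟪gw b, a - b⟫) 0 := by
    have hg : HasDerivAt (fun s : ℝ => b + s • (a - b)) (a - b) 0 := by
      simpa using ((hasDerivAt_id (0:ℝ)).smul_const (a - b)).const_add b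
    have hb : HasFDerivAt w ((InnerProductSpace.toDual ℝ (EuclideanSpace ℝ (Fin d))) (gw b))
        ((fun s : ℝ => b + s • (a - b)) 0) := by simpa using (hw_diff b).hasFDerivAt
    have := hb.comp_hasDerivAt 0 hg
    simp only [InnerProductSpace.toDual_apply_apply] at this; exact this
  have hslope : ∀ s : ℝ, s ∈ Set.Ioc (0:ℝ) 1 → slope φ 0 s ≤ w a - w b := by
    intro s hs
    have hconv := hw.2 (Set.mem_univ a) (Set.mem_univ b) (le_of_lt hs.1)
        (by linarith [hs.2] : (0:ℝ) ≤ 1 - s) (by ring)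
    have heq : b + s • (a - b) = s • a + (1 - s) • b := by
      module
    have : φ s ≤ s * w a + (1 - s) * w b := by
      rw [hφ]; simp only [heq]; simpa [smul_eq_mul] using hconv
    have hφ0 : φ 0 = w b := by simp [hφ]
    rw [slope_def_field, div_le_iff₀ (by simpa using hs.1)]
    nlinarith [hs.1]
  have htend : Filter.Tendsto (slope φ 0) (nhdsWithin 0 (Set.Ioi 0)) (nhds ⟪gw b, a - b⟫) := by
    exact (hasDerivAt_iff_tendsto_slope.mp hder).mono_left
      (nhdsWithin_mono _ (by intro z hz; exact ne_of_gt hz))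
  exact le_of_tendsto htend
    (Filter.eventually_of_mem (Ioc_mem_nhdsGT_of_mem ⟨le_refl _, zero_lt_one⟩) hslope)

/-- Loss convergence of constant-stepsize BPPA on linearly separable data with exponential loss:
`L(θ_t) ≤ exp(−Rγ) + R² L_w/(4ηt)` for every `R > 0`, and with `R = log(γηt)/γ`
(valid when `γηt > 1`), `L(θ_t) ≤ 1/(γηt) + L_w log²(γηt)/(4γ²ηt)`. -/
theorem bppa_exponential_loss_rate {d n : ℕ} (hn : 0 < n)
    (x : Fin n → EuclideanSpace ℝ (Fin d)) (y : Fin n → ℝ)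
    (hy : ∀ i, y i = 1 ∨ y i = -1)
    (nrm : EuclideanSpace ℝ (Fin d) → ℝ)
    (hnrm_smul : ∀ (c : ℝ) v, nrm (c • v) = |c| * nrm v)
    (γ : ℝ) (hγ : 0 < γ)
    (u : EuclideanSpace ℝ (Fin d)) (hu : nrm u = 1)
    (hmargin : ∀ i, γ ≤ ⟪u, y i • x i⟫)
    (w : EuclideanSpace ℝ (Fin d) → ℝ)
    (gw : EuclideanSpace ℝ (Fin d) → EuclideanSpace ℝ (Fin d))
    (Lw : ℝ) (hLw : 0 < Lw)
    (hw : ConvexOn ℝ Set.univ w)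
    (hw_diff : ∀ a, HasGradientAt w (gw a) a)
    (D : EuclideanSpace ℝ (Fin d) → EuclideanSpace ℝ (Fin d) → ℝ)
    (hD : ∀ a b, D a b = w a - w b - ⟪gw b, a - b⟫)
    (hsmooth : ∀ a b, D a b ≤ Lw/2 * (nrm (a - b))^2)
    (L : EuclideanSpace ℝ (Fin d) → ℝ)
    (hL : ∀ θ, L θ = (1/(n:ℝ)) * ∑ i, Real.exp (-⟪θ, y i • x i⟫))
    (η : ℝ) (hη : 0 < η)
    (θ : ℕ → EuclideanSpace ℝ (Fin d))
    (hθ0 : θ 0 = 0)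
    (hiter : ∀ s θ', L (θ (s+1)) + 1/(2*η) * D (θ (s+1)) (θ s)
        ≤ L θ' + 1/(2*η) * D θ' (θ s))
    (t : ℕ) (ht : 0 < t) :
    (∀ R : ℝ, 0 < R → L (θ t) ≤ Real.exp (-(R*γ)) + R^2 * Lw/(4*η*t))
    ∧ (1 < γ*η*t →
        L (θ t) ≤ 1/(γ*η*t) + Lw * (Real.log (γ*η*t))^2/(4*γ^2*η*t)) := by
  have ht' : (0:ℝ) < t := by exact_mod_cast ht
  have hDnn : ∀ a b, 0 ≤ D a b := by
    intro a b
    rw [hD]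
    have := bregman_nonneg_aux w gw hw hw_diff a b
    linarith
  -- shift lemma: L (v + c • u) ≤ exp (-(c*γ)) * L v for c ≥ 0
  have hshift : ∀ (v : EuclideanSpace ℝ (Fin d)) (c : ℝ), 0 ≤ c →
      L (v + c • u) ≤ Real.exp (-(c*γ)) * L v := by
    intro v c hc
    rw [hL, hL, mul_comm (Real.exp (-(c*γ))), mul_assoc, Finset.sum_mul]
    apply mul_le_mul_of_nonneg_left _ (by positivity)
    apply Finset.sum_le_sum
    intro i _
    rw [← Real.exp_add]
    apply Real.exp_le_exp.mpr
    have h1 : ⟪v + c • u, y i • x i⟫ = ⟪v, y i • x i⟫ + c * ⟪u, y i • x i⟫ := by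
      rw [inner_add_left, real_inner_smul_left]
    have h2 : c * γ ≤ c * ⟪u, y i • x i⟫ := mul_le_mul_of_nonneg_left (hmargin i) hc
    rw [h1]
    linarith
  have hL0 : L (θ 0) = 1 := by
    rw [hθ0, hL]
    simp [Real.exp_zero]
    field_simp
  have main : ∀ R : ℝ, 0 < R → L (θ t) ≤ Real.exp (-(R*γ)) + R^2 * Lw/(4*η*t) := by
    intro R hR
    set c : ℝ := R / t with hc
    have hc0 : 0 < c := by positivity
    set C : ℝ := R^2 * Lw / (4 * η * t^2) with hCdef
    have hC0 : 0 ≤ C := by positivity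
    -- one-step inequality
    have step : ∀ s : ℕ, L (θ (s+1)) ≤ Real.exp (-(c*γ)) * L (θ s) + C := by
      intro s
      have hit := hiter s (θ s + c • u)
      have hDpos : 0 ≤ 1/(2*η) * D (θ (s+1)) (θ s) :=
        mul_nonneg (by positivity) (hDnn _ _)
      have hdiff : (θ s + c • u) - θ s = c • u := by abel
      have hsm : D (θ s + c • u) (θ s) ≤ Lw/2 * c^2 := by
        have := hsmooth (θ s + c • u) (θ s)
        rw [hdiff, hnrm_smul, hu, mul_one, abs_of_pos hc0] at this
        linarith
      have hCeq : 1/(2*η) * (Lw/2 * c^2) = C := by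
        rw [hCdef, hc]
        field_simp
        ring
      have h3 : L (θ (s+1)) ≤ L (θ s + c • u) + 1/(2*η) * D (θ s + c • u) (θ s) := by
        linarith
      have h4 : 1/(2*η) * D (θ s + c • u) (θ s) ≤ C := by
        rw [← hCeq]
        exact mul_le_mul_of_nonneg_left hsm (by positivity)
      have h5 := hshift (θ s) c (le_of_lt hc0)
      linarith
    -- induction
    have ind : ∀ s : ℕ, L (θ s) ≤ Real.exp (-(s*(c*γ))) + s * C := by
      intro s
      induction s with
      | zero => simp [hL0]
      | succ s ih =>
        have h1 := step s
        have hexp : (0:ℝ) < Real.exp (-(c*γ)) := Real.exp_pos _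
        have h2 : Real.exp (-(c*γ)) * L (θ s)
            ≤ Real.exp (-(c*γ)) * (Real.exp (-(s*(c*γ))) + s * C) :=
          mul_le_mul_of_nonneg_left ih (le_of_lt hexp)
        have hexple : Real.exp (-(c*γ)) ≤ 1 := by
          apply Real.exp_le_one_iff.mpr
          nlinarith
        have h3 : Real.exp (-(c*γ)) * Real.exp (-(s*(c*γ)))
            = Real.exp (-((s+1:ℕ)*(c*γ))) := by
          rw [← Real.exp_add]
          congr 1
          push_cast
          ring
        have h4 : Real.exp (-(c*γ)) * (s * C) ≤ s * C := by
          have : (0:ℝ) ≤ s * C := by positivity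
          nlinarith
        calc L (θ (s+1)) ≤ Real.exp (-(c*γ)) * L (θ s) + C := h1
          _ ≤ Real.exp (-(c*γ)) * (Real.exp (-(s*(c*γ))) + s * C) + C := by linarith
          _ = Real.exp (-((s+1:ℕ)*(c*γ))) + Real.exp (-(c*γ)) * (s*C) + C := by
              rw [mul_add, h3]
          _ ≤ Real.exp (-((s+1:ℕ)*(c*γ))) + ((s:ℝ)+1) * C := by push_cast; nlinarith
          _ = Real.exp (-((s+1:ℕ)*(c*γ))) + ((s+1:ℕ):ℝ) * C := by push_cast; ring
    have := ind t
    have e1 : (t:ℝ) * (c*γ) = R*γ := by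
      rw [hc]; field_simp
    have htne : (t:ℝ) ≠ 0 := ne_of_gt ht'
    have e2 : (t:ℝ) * C = R^2 * Lw/(4*η*t) := by
      rw [hCdef]
      field_simp
    rw [← e1, ← e2]
    linarith
  refine ⟨main, ?_⟩
  intro hT
  set T : ℝ := γ*η*t with hTdef
  have hT0 : (0:ℝ) < T := by rw [hTdef]; positivity
  have hlog : 0 < Real.log T := Real.log_pos hT
  have hR : 0 < Real.log T / γ := by positivity
  have := main (Real.log T / γ) hR
  have e1 : Real.log T / γ * γ = Real.log T := by field_simp
  have e2 : Real.exp (-(Real.log T / γ * γ)) = 1 / T := by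
    rw [e1, Real.exp_neg, Real.exp_log hT0, one_div]
  have e3 : (Real.log T / γ)^2 * Lw/(4*η*t) = Lw * (Real.log T)^2/(4*γ^2*η*t) := by
    field_simp
  rw [e2, e3] at this
  exact this
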